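/- Let p(x) = (1/√(2πΣ)) exp(−(x−μ)²/(2Σ)) be a Gaussian density on ℝ with mean μ and variance Σ > 0, and let h(x) = γx with γ ∈ ℝ, σ_W > 0. Then the constant function K(x) = γΣ/σ_W² satisfies the Euler–Lagrange boundary value problem −d/dx( (1/p(x)) · d/dx( p(x) K(x) ) ) = h'(x)/σ_W² for all x ∈ ℝ. -/

import Mathlib

open Real

theorem gaussian_gain_solves_ELBVP
    (μ Sig γ σW : ℝ) (hSig : Sig > 0) (hσ : σW > 0)
    (p : ℝ → ℝ) (hp : ∀ x, p x = (1 / Real.sqrt (2 * π * Sig)) * Real.exp (-(x - μ)^2 / (2 * Sig)))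
    (h : ℝ → ℝ) (hh : ∀ x, h x = γ * x)
    (K : ℝ → ℝ) (hK : ∀ x, K x = γ * Sig / σW^2) :
    ∀ x : ℝ,
      -deriv (fun y => (1 / p y) * deriv (fun z => p z * K z) y) x
        = deriv h x / σW^2 := by
  intro x
  set C := (1 : ℝ) / Real.sqrt (2 * π * Sig) with hC
  set c := γ * Sig / σW^2 with hc
  have hCpos : 0 < C := by
    have : 0 < Real.sqrt (2 * π * Sig) := Real.sqrt_pos.2 (by positivity)
    positivity
  have hppos : ∀ y, 0 < p y := by
    intro y; rw [hp]; positivity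
  have hpfun : p = fun y => C * Real.exp (-(y - μ)^2 / (2 * Sig)) := funext hp
  have hpd : ∀ y, HasDerivAt p (p y * (-(y - μ) / Sig)) y := by
    intro y
    have h1 : HasDerivAt (fun x : ℝ => x - μ) 1 y := (hasDerivAt_id y).sub_const μ
    have h2 : HasDerivAt (fun x : ℝ => (x - μ)^2) (2 * (y - μ)) y := by
      exact (h1.pow 2).congr_deriv (by norm_num)
    have h3 : HasDerivAt (fun x : ℝ => -(x - μ)^2 / (2 * Sig))
        (-(y - μ) / Sig) y := by
      have := (h2.neg).div_const (2 * Sig)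
      exact this.congr_deriv (by ring)
    have h4 := (h3.exp).const_mul C
    rw [hpfun]
    exact h4.congr_deriv (by beta_reduce; ring)
  have hdpK : ∀ y, deriv (fun z => p z * K z) y = c * (p y * (-(y - μ) / Sig)) := by
    intro y
    have : (fun z => p z * K z) = fun z => c * p z := by
      funext z; rw [hK z]; ring
    rw [this]
    rw [((hpd y).const_mul c).deriv]
  have hfun : (fun y => (1 / p y) * deriv (fun z => p z * K z) y)
      = fun y => c / Sig * (μ - y) := by
    funext y
    rw [hdpK y]
    have hpne : p y ≠ 0 := (hppos y).ne'
    field_simp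
    ring
  rw [hfun, funext hh]
  have hd1 : deriv (fun y : ℝ => c / Sig * (μ - y)) x = -(c / Sig) := by
    have : HasDerivAt (fun y : ℝ => c / Sig * (μ - y)) (c / Sig * (-1)) x := by
      exact ((hasDerivAt_id x).const_sub μ).const_mul (c / Sig)
    rw [this.deriv]; ring
  have hd2 : deriv (fun x : ℝ => γ * x) x = γ := by
    simpa using (hasDerivAt_id x).const_mul γ |>.deriv
  rw [hd1, hd2, hc]
  field_simp
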